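/- Let μ₃ be the uniform distribution on the three vertices r_j = (cos(2π(j−1)/3), sin(2π(j−1)/3), 0), j = 1,2,3, of a regular triangle inscribed in the equator of the unit sphere S² of ℝ³. Then for every C ∈ [0,1], g(C,μ₃) = (1 + √(1 + 3C²))/3; in particular g*(μ₃) = 2/3. -/

import Mathlib

open MeasureTheory Real
open scoped ENNReal

noncomputable section

abbrev E3 := EuclideanSpace ℝ (Fin 3)

/-- The unit sphere S² in ℝ³. -/
def unitSphere : Set E3 := Metric.sphere (0 : E3) 1

/-- `g C μ` is the supremum over unit vectors `v` of `∫ √(C² + (1−C²)⟨r,v⟩²) dμ(r)`. -/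
def g (C : ℝ) (μ : Measure E3) : ℝ :=
  ⨆ v : unitSphere, ∫ r, Real.sqrt (C ^ 2 + (1 - C ^ 2) * (inner ℝ r (v : E3) : ℝ) ^ 2) ∂μ


/-- The point `(cos φ, sin φ, 0)` on the equator of the unit sphere. -/
def eqPt (φ : ℝ) : E3 := (WithLp.equiv 2 (Fin 3 → ℝ)).symm ![Real.cos φ, Real.sin φ, 0]

/-- The uniform probability measure on the equator: the pushforward of the normalized
Lebesgue measure on `[0, 2π)` under `φ ↦ (cos φ, sin φ, 0)`. -/
def equatorUniform : Measure E3 :=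
  Measure.map eqPt ((ENNReal.ofReal (2 * π))⁻¹ • volume.restrict (Set.Ico 0 (2 * π)))

lemma sqrt_term_le (C D u : ℝ) (hu0 : 0 ≤ u) (hu1 : u ≤ 1) (hD1 : 1 ≤ D) (hD2 : D ≤ 2)
    (hC2 : C^2 = (D^2-1)/3) :
    Real.sqrt (C^2 + (1-C^2)*u) ≤ ((5*D-4)*(D+1) - (D-2)*(D+10)*u - 4*(D-2)^2*u^2) / (9*D) := by
  have hD0 : (0:ℝ) < 9*D := by linarith
  set N := (5*D-4)*(D+1) - (D-2)*(D+10)*u - 4*(D-2)^2*u^2 with hN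
  have hA : 0 ≤ (5*D-4)*(D+1) := by nlinarith
  have hN0 : 0 ≤ N := by
    have e : N = (1-u)*((5*D-4)*(D+1)) + u*(9*D) + 4*(D-2)^2*(u*(1-u)) := by rw [hN]; ring
    rw [e]
    have h1 := mul_nonneg (by linarith : (0:ℝ) ≤ 1-u) hA
    have h2 := mul_nonneg hu0 (by linarith : (0:ℝ) ≤ 9*D)
    have h3 := mul_nonneg (sq_nonneg (D-2)) (mul_nonneg hu0 (by linarith : (0:ℝ) ≤ 1-u))
    linarith
  have hid : N^2 - (C^2 + (1-C^2)*u)*(9*D)^2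
      = 16*(2-D)^3*(1-u)*(2*(D+1)-(2-D)*u)*(u-1/4)^2 := by rw [hN, hC2]; ring
  have hrhs : 0 ≤ 16*(2-D)^3*(1-u)*(2*(D+1)-(2-D)*u)*(u-1/4)^2 := by
    have h1 : (0:ℝ) ≤ 16*(2-D)^3 := by
      have := pow_nonneg (by linarith : (0:ℝ) ≤ 2-D) 3; linarith
    have h2 : (0:ℝ) ≤ 1-u := by linarith
    have h3 : (0:ℝ) ≤ 2*(D+1)-(2-D)*u := by nlinarith
    exact mul_nonneg (mul_nonneg (mul_nonneg h1 h2) h3) (sq_nonneg _)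
  have key : C^2 + (1-C^2)*u ≤ (N/(9*D))^2 := by
    rw [div_pow, le_div_iff₀ (by positivity)]
    nlinarith [hid, hrhs]
  calc Real.sqrt (C^2 + (1-C^2)*u) ≤ Real.sqrt ((N/(9*D))^2) := Real.sqrt_le_sqrt key
    _ = N/(9*D) := Real.sqrt_sq (div_nonneg hN0 (by linarith))

lemma quad_bound (D w : ℝ) (hD1 : 1 ≤ D) (hD2 : D ≤ 2) (hw0 : 0 ≤ w) (hw1 : w ≤ 1) :
    3*((5*D-4)*(D+1)) - (D-2)*(D+10)*(3/2*w) - 4*(D-2)^2*(9/8*w^2) ≤ (1+D)*(9*D) := by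
  nlinarith [mul_nonneg (mul_nonneg (by linarith : (0:ℝ) ≤ 2-D)
      (by linarith : (0:ℝ) ≤ 7*D-2)) (by linarith : (0:ℝ) ≤ 1-w),
    mul_nonneg (sq_nonneg (2-D)) (sq_nonneg (1-w))]

lemma core (C D s x y z : ℝ) (hD1 : 1 ≤ D) (hD2le : D ≤ 2)
    (hC2 : C^2 = (D^2-1)/3) (hs : s^2 = 3/4) (hxyz : x^2+y^2+z^2 = 1) :
    Real.sqrt (C^2+(1-C^2)*x^2) + Real.sqrt (C^2+(1-C^2)*(-x/2+s*y)^2)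
      + Real.sqrt (C^2+(1-C^2)*(-x/2-s*y)^2) ≤ 1 + D := by
  have hD0 : (0:ℝ) < 9*D := by linarith
  have hu1 : x^2 ≤ 1 := by nlinarith [sq_nonneg y, sq_nonneg z]
  have hu2 : (-x/2+s*y)^2 ≤ 1 := by nlinarith [sq_nonneg (s*x+y/2), sq_nonneg z]
  have hu3 : (-x/2-s*y)^2 ≤ 1 := by nlinarith [sq_nonneg (s*x-y/2), sq_nonneg z]
  have b1 := sqrt_term_le C D (x^2) (sq_nonneg _) hu1 hD1 hD2le hC2
  have b2 := sqrt_term_le C D ((-x/2+s*y)^2) (sq_nonneg _) hu2 hD1 hD2le hC2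
  have b3 := sqrt_term_le C D ((-x/2-s*y)^2) (sq_nonneg _) hu3 hD1 hD2le hC2
  have e1 : x^2 + (-x/2+s*y)^2 + (-x/2-s*y)^2 = 3/2*(x^2+y^2) := by
    linear_combination (2*y^2) * hs
  have e2 : (x^2)^2 + ((-x/2+s*y)^2)^2 + ((-x/2-s*y)^2)^2 = 9/8*(x^2+y^2)^2 := by
    linear_combination (3*x^2*y^2 + 2*s^2*y^4 + 3/2*y^4) * hs
  set w := x^2 + y^2 with hw
  have hw0 : 0 ≤ w := by positivity
  have hw1 : w ≤ 1 := by nlinarith [sq_nonneg z]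
  have hsum : ((5*D-4)*(D+1) - (D-2)*(D+10)*(x^2) - 4*(D-2)^2*(x^2)^2) / (9*D)
      + ((5*D-4)*(D+1) - (D-2)*(D+10)*((-x/2+s*y)^2) - 4*(D-2)^2*((-x/2+s*y)^2)^2) / (9*D)
      + ((5*D-4)*(D+1) - (D-2)*(D+10)*((-x/2-s*y)^2) - 4*(D-2)^2*((-x/2-s*y)^2)^2) / (9*D)
      ≤ 1 + D := by
    rw [← add_div, ← add_div, div_le_iff₀ hD0]
    have enum : ((5*D-4)*(D+1) - (D-2)*(D+10)*(x^2) - 4*(D-2)^2*(x^2)^2)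
        + ((5*D-4)*(D+1) - (D-2)*(D+10)*((-x/2+s*y)^2) - 4*(D-2)^2*((-x/2+s*y)^2)^2)
        + ((5*D-4)*(D+1) - (D-2)*(D+10)*((-x/2-s*y)^2) - 4*(D-2)^2*((-x/2-s*y)^2)^2)
        = 3*((5*D-4)*(D+1)) - (D-2)*(D+10)*(3/2*w) - 4*(D-2)^2*(9/8*w^2) := by
      linear_combination (-((D-2)*(D+10))) * e1 + (-(4*(D-2)^2)) * e2
    rw [enum]
    exact quad_bound D w hD1 hD2le hw0 hw1
  linarith [b1, b2, b3, hsum]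

lemma eqPt_apply (φ : ℝ) (i : Fin 3) : eqPt φ i = ![Real.cos φ, Real.sin φ, 0] i := rfl

lemma inner_eqPt (φ : ℝ) (v : E3) :
    (inner ℝ (eqPt φ) v : ℝ) = Real.cos φ * v 0 + Real.sin φ * v 1 := by
  rw [PiLp.inner_apply, Fin.sum_univ_three]
  simp [eqPt_apply, Matrix.cons_val_zero, Matrix.cons_val_one, mul_comm]

lemma norm_eqPt (φ : ℝ) : ‖eqPt φ‖ = 1 := by
  rw [EuclideanSpace.norm_eq, Fin.sum_univ_three]
  simp only [eqPt_apply, Matrix.cons_val_zero, Matrix.cons_val_one, Matrix.head_cons,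
    Matrix.cons_val_two, Matrix.tail_cons, Real.norm_eq_abs]
  rw [show |Real.cos φ|^2 + |Real.sin φ|^2 + |(0:ℝ)|^2 = Real.sin φ^2 + Real.cos φ^2 by
    rw [sq_abs, sq_abs, abs_zero]; ring, Real.sin_sq_add_cos_sq, Real.sqrt_one]

lemma eqPt_mem : eqPt 0 ∈ unitSphere := by
  simp [unitSphere, mem_sphere_zero_iff_norm, norm_eqPt]

lemma integral_three (C : ℝ) (v : E3) :
    ∫ r, Real.sqrt (C ^ 2 + (1 - C ^ 2) * (inner ℝ r v : ℝ) ^ 2)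
      ∂((3 : ℝ≥0∞)⁻¹ • (Measure.dirac (eqPt 0) + Measure.dirac (eqPt (2 * π / 3))
        + Measure.dirac (eqPt (4 * π / 3))))
    = (1/3) * (Real.sqrt (C ^ 2 + (1 - C ^ 2) * (inner ℝ (eqPt 0) v : ℝ) ^ 2)
      + Real.sqrt (C ^ 2 + (1 - C ^ 2) * (inner ℝ (eqPt (2*π/3)) v : ℝ) ^ 2)
      + Real.sqrt (C ^ 2 + (1 - C ^ 2) * (inner ℝ (eqPt (4*π/3)) v : ℝ) ^ 2)) := by
  set f : E3 → ℝ := fun r => Real.sqrt (C ^ 2 + (1 - C ^ 2) * (inner ℝ r v : ℝ) ^ 2) with hf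
  have hfc : Continuous f := by
    apply Real.continuous_sqrt.comp
    exact continuous_const.add (continuous_const.mul ((continuous_id.inner continuous_const).pow 2))
  have hint : ∀ a : E3, Integrable f (Measure.dirac a) := by
    intro a
    refine ⟨hfc.aestronglyMeasurable, ?_⟩
    rw [HasFiniteIntegral, lintegral_dirac]
    exact ENNReal.coe_lt_top
  rw [integral_smul_measure, integral_add_measure ((hint _).add_measure (hint _)) (hint _),
    integral_add_measure (hint _) (hint _), integral_dirac, integral_dirac, integral_dirac]
  simp only [smul_eq_mul]
  rw [show ((3:ℝ≥0∞)⁻¹).toReal = 1/3 by simp]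

lemma g_eq (C : ℝ) (hC : C ∈ Set.Icc (0 : ℝ) 1) :
    g C ((3 : ℝ≥0∞)⁻¹ • (Measure.dirac (eqPt 0) + Measure.dirac (eqPt (2 * π / 3))
        + Measure.dirac (eqPt (4 * π / 3))))
      = (1 + Real.sqrt (1 + 3 * C ^ 2)) / 3 := by
  obtain ⟨hC0, hC1⟩ := hC
  set D := Real.sqrt (1 + 3 * C ^ 2) with hD
  have hD2 : D^2 = 1 + 3*C^2 := Real.sq_sqrt (by positivity)
  have hDnn : 0 ≤ D := Real.sqrt_nonneg _
  have hD1 : 1 ≤ D := by nlinarith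
  have hDle : D ≤ 2 := by nlinarith
  have hC2 : C^2 = (D^2-1)/3 := by rw [hD2]; ring
  have hs : (Real.sqrt 3 / 2)^2 = 3/4 := by
    rw [div_pow, Real.sq_sqrt (by norm_num : (3:ℝ) ≥ 0)]; norm_num
  have c1 : Real.cos (2*π/3) = -(1/2) := by
    rw [show (2*π/3) = π - π/3 by ring, Real.cos_pi_sub, Real.cos_pi_div_three]
  have s1 : Real.sin (2*π/3) = Real.sqrt 3/2 := by
    rw [show (2*π/3) = π - π/3 by ring, Real.sin_pi_sub, Real.sin_pi_div_three]
  have c2 : Real.cos (4*π/3) = -(1/2) := by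
    rw [show (4*π/3) = π/3 + π by ring, Real.cos_add_pi, Real.cos_pi_div_three]
  have s2 : Real.sin (4*π/3) = -(Real.sqrt 3/2) := by
    rw [show (4*π/3) = π/3 + π by ring, Real.sin_add_pi, Real.sin_pi_div_three]
  have hub : ∀ v : unitSphere,
      (∫ r, Real.sqrt (C ^ 2 + (1 - C ^ 2) * (inner ℝ r (v : E3) : ℝ) ^ 2)
        ∂((3 : ℝ≥0∞)⁻¹ • (Measure.dirac (eqPt 0) + Measure.dirac (eqPt (2 * π / 3))
          + Measure.dirac (eqPt (4 * π / 3))))) ≤ (1 + D)/3 := by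
    rintro ⟨v, hv⟩
    rw [integral_three]
    have hnv : ‖v‖ = 1 := by
      simpa [unitSphere, mem_sphere_zero_iff_norm] using hv
    have hsum : v 0^2 + v 1^2 + v 2^2 = 1 := by
      have h2 : ‖v‖^2 = 1 := by rw [hnv]; norm_num
      rw [EuclideanSpace.norm_eq, Real.sq_sqrt (by positivity), Fin.sum_univ_three] at h2
      simpa [sq_abs] using h2
    have e0 : (inner ℝ (eqPt 0) v : ℝ) = v 0 := by
      rw [inner_eqPt]; simp
    have eA : (inner ℝ (eqPt (2*π/3)) v : ℝ) = -(v 0)/2 + (Real.sqrt 3/2) * v 1 := by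
      rw [inner_eqPt, c1, s1]; ring
    have eB : (inner ℝ (eqPt (4*π/3)) v : ℝ) = -(v 0)/2 - (Real.sqrt 3/2) * v 1 := by
      rw [inner_eqPt, c2, s2]; ring
    rw [e0, eA, eB]
    have := core C D (Real.sqrt 3/2) (v 0) (v 1) (v 2) hD1 hDle hC2 hs hsum
    linarith
  haveI : Nonempty ↥unitSphere := ⟨⟨eqPt 0, eqPt_mem⟩⟩
  have hval : (∫ r, Real.sqrt (C ^ 2 + (1 - C ^ 2) * (inner ℝ r (eqPt 0) : ℝ) ^ 2)
        ∂((3 : ℝ≥0∞)⁻¹ • (Measure.dirac (eqPt 0) + Measure.dirac (eqPt (2 * π / 3))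
          + Measure.dirac (eqPt (4 * π / 3))))) = (1 + D)/3 := by
    rw [integral_three]
    have i0 : (inner ℝ (eqPt 0) (eqPt 0) : ℝ) = 1 := by
      rw [inner_eqPt]; simp [eqPt_apply]
    have iA : (inner ℝ (eqPt (2*π/3)) (eqPt 0) : ℝ) = -(1/2) := by
      rw [inner_eqPt, c1]; simp [eqPt_apply]
    have iB : (inner ℝ (eqPt (4*π/3)) (eqPt 0) : ℝ) = -(1/2) := by
      rw [inner_eqPt, c2]; simp [eqPt_apply]
    rw [i0, iA, iB]
    have t1 : Real.sqrt (C^2 + (1-C^2) * (1:ℝ)^2) = 1 := by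
      rw [show C^2 + (1-C^2)*(1:ℝ)^2 = 1 by ring, Real.sqrt_one]
    have t2 : Real.sqrt (C^2 + (1-C^2) * (-(1/2):ℝ)^2) = D/2 := by
      rw [show C^2 + (1-C^2)*(-(1/2):ℝ)^2 = (D/2)^2 by rw [div_pow, hD2]; ring]
      exact Real.sqrt_sq (by positivity)
    rw [t1, t2]
    ring
  apply le_antisymm
  · exact ciSup_le hub
  · have hb : BddAbove (Set.range (fun v : unitSphere =>
        ∫ r, Real.sqrt (C ^ 2 + (1 - C ^ 2) * (inner ℝ r (v : E3) : ℝ) ^ 2)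
          ∂((3 : ℝ≥0∞)⁻¹ • (Measure.dirac (eqPt 0) + Measure.dirac (eqPt (2 * π / 3))
            + Measure.dirac (eqPt (4 * π / 3)))))) := by
      refine ⟨(1 + D)/3, ?_⟩
      rintro _ ⟨v, rfl⟩
      exact hub v
    have := le_ciSup hb (⟨eqPt 0, eqPt_mem⟩ : unitSphere)
    rw [hval] at this
    exact this

/-- Let `μ₃` be the uniform distribution on the three vertices of a regular triangle inscribed
in the equator of the unit sphere S² of ℝ³.  Then for every `C ∈ [0,1]`,
`g(C,μ₃) = (1 + √(1+3C²))/3`; in particular `g*(μ₃) = g(0,μ₃) = 2/3`. -/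
theorem g_triangle (C : ℝ) (hC : C ∈ Set.Icc (0 : ℝ) 1) :
    g C ((3 : ℝ≥0∞)⁻¹ • (Measure.dirac (eqPt 0) + Measure.dirac (eqPt (2 * π / 3))
        + Measure.dirac (eqPt (4 * π / 3))))
      = (1 + Real.sqrt (1 + 3 * C ^ 2)) / 3 ∧
    g 0 ((3 : ℝ≥0∞)⁻¹ • (Measure.dirac (eqPt 0) + Measure.dirac (eqPt (2 * π / 3))
        + Measure.dirac (eqPt (4 * π / 3))))
      = 2 / 3 := by
  refine ⟨g_eq C hC, ?_⟩
  have h := g_eq 0 ⟨le_refl 0, zero_le_one⟩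
  rw [h]
  norm_num
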